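/- Let V be a 4-dimensional real inner product space, (e₁,e₂,e₃,e₄) an orthonormal basis of V, and J an orthogonal complex structure whose 2-form ω(x,y) = ⟨Jx, y⟩ satisfies ω(e₁,e₂) = ω(e₃,e₄) = η, ω(e₁,e₃) = −ω(e₂,e₄) = √(1−η²), ω(e₁,e₄) = ω(e₂,e₃) = 0. Let K be a J-invariant algebraic curvature tensor on V. Then for all X, Y ∈ V: (1−η²)(K(X,Y,e₁,e₂) + K(X,Y,e₃,e₄)) = η√(1−η²)(K(X,Y,e₁,e₃) − K(X,Y,e₂,e₄)). -/

import Mathlib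

open scoped RealInnerProductSpace

set_option maxHeartbeats 1000000

/-- In the adapted basis where the Kähler form of `J` has entries
`ω(e₁,e₂) = ω(e₃,e₄) = η`, `ω(e₁,e₃) = -ω(e₂,e₄) = √(1-η²)`, `ω(e₁,e₄) = ω(e₂,e₃) = 0`,
a `J`-invariant algebraic curvature tensor satisfies
`(1−η²)(K(X,Y,e₁,e₂) + K(X,Y,e₃,e₄)) = η√(1−η²)(K(X,Y,e₁,e₃) − K(X,Y,e₂,e₄))`. -/
theorem curvature_identity_adapted_basis
    {V : Type*} [NormedAddCommGroup V] [InnerProductSpace ℝ V]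
    (hdim : Module.finrank ℝ V = 4)
    (e : OrthonormalBasis (Fin 4) ℝ V)
    (J : V →ₗ[ℝ] V)
    (hJ2 : ∀ x : V, J (J x) = -x) (hJo : ∀ x y : V, ⟪J x, J y⟫ = ⟪x, y⟫)
    (η : ℝ)
    (h12 : ⟪J (e 0), e 1⟫ = η) (h34 : ⟪J (e 2), e 3⟫ = η)
    (h13 : ⟪J (e 0), e 2⟫ = Real.sqrt (1 - η ^ 2))
    (h24 : ⟪J (e 1), e 3⟫ = -Real.sqrt (1 - η ^ 2))
    (h14 : ⟪J (e 0), e 3⟫ = 0) (h23 : ⟪J (e 1), e 2⟫ = 0)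
    (K : V →ₗ[ℝ] V →ₗ[ℝ] V →ₗ[ℝ] V →ₗ[ℝ] ℝ)
    (hK1 : ∀ X Y Z W : V, K X Y Z W = -K Y X Z W)
    (hK2 : ∀ X Y Z W : V, K X Y Z W = -K X Y W Z)
    (hK3 : ∀ X Y Z W : V, K X Y Z W = K Z W X Y)
    (hBianchi : ∀ X Y Z W : V, K X Y Z W + K Y Z X W + K Z X Y W = 0)
    (hJinv : ∀ X Y Z W : V, K X Y (J Z) (J W) = K X Y Z W) :
    ∀ X Y : V,
      (1 - η ^ 2) * (K X Y (e 0) (e 1) + K X Y (e 2) (e 3)) =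
        η * Real.sqrt (1 - η ^ 2) * (K X Y (e 0) (e 2) - K X Y (e 1) (e 3)) := by
  set s := Real.sqrt (1 - η ^ 2) with hs_def
  -- skew-adjointness of J
  have skew : ∀ x y : V, ⟪J x, y⟫ = -⟪x, J y⟫ := by
    intro x y
    have h := hJo x (J y)
    rw [hJ2 y, inner_neg_right] at h
    linarith
  have h00 : ⟪J (e 0), e 0⟫ = 0 := by
    have h := skew (e 0) (e 0)
    have h2 : ⟪e 0, J (e 0)⟫ = ⟪J (e 0), e 0⟫ := real_inner_comm _ _
    linarith [h, h2.symm ▸ h]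
  have h11 : ⟪J (e 1), e 1⟫ = 0 := by
    have h := skew (e 1) (e 1)
    have h2 : ⟪e 1, J (e 1)⟫ = ⟪J (e 1), e 1⟫ := real_inner_comm _ _
    rw [h2] at h; linarith
  have h10 : ⟪J (e 1), e 0⟫ = -η := by
    have h := skew (e 1) (e 0)
    have h2 : ⟪e 1, J (e 0)⟫ = ⟪J (e 0), e 1⟫ := real_inner_comm _ _
    rw [h2, h12] at h; linarith
  -- expansions of J e₀, J e₁ in the basis
  have hrepr : ∀ x : V, x = ∑ i : Fin 4, ⟪e i, x⟫ • e i := by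
    intro x
    have := e.sum_repr' x
    simpa using this.symm
  have hJe0 : J (e 0) = η • e 1 + s • e 2 := by
    have h := hrepr (J (e 0))
    rw [Fin.sum_univ_four] at h
    rw [(real_inner_comm (J (e 0)) (e 0)).trans h00,
      (real_inner_comm (J (e 0)) (e 1)).trans h12,
      (real_inner_comm (J (e 0)) (e 2)).trans h13,
      (real_inner_comm (J (e 0)) (e 3)).trans h14] at h
    simpa using h
  have hJe1 : J (e 1) = (-η) • e 0 + (-s) • e 3 := by
    have h := hrepr (J (e 1))
    rw [Fin.sum_univ_four] at h
    rw [(real_inner_comm (J (e 1)) (e 0)).trans h10,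
      (real_inner_comm (J (e 1)) (e 1)).trans h11,
      (real_inner_comm (J (e 1)) (e 2)).trans h23,
      (real_inner_comm (J (e 1)) (e 3)).trans h24] at h
    rw [h]; module
  -- s² = 1 - η²
  have horth := orthonormal_iff_ite.mp e.orthonormal
  have hs2 : s ^ 2 = 1 - η ^ 2 := by
    have h := hJo (e 0) (e 0)
    rw [hJe0] at h
    simp only [inner_add_left, inner_add_right, real_inner_smul_left, real_inner_smul_right,
      horth] at h
    rw [if_neg (by decide : ¬ ((2 : Fin 4) = 1)), if_neg (by decide : ¬ ((1 : Fin 4) = 2))] at h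
    simp only [↓reduceIte] at h
    nlinarith [h]
  intro X Y
  have hk := hJinv X Y (e 0) (e 1)
  rw [hJe0, hJe1] at hk
  simp only [map_add, map_smul, map_neg, LinearMap.add_apply, LinearMap.smul_apply,
    LinearMap.neg_apply, smul_eq_mul] at hk
  have a1 : K X Y (e 1) (e 0) = -K X Y (e 0) (e 1) := by rw [← hK2]
  have a2 : K X Y (e 2) (e 0) = -K X Y (e 0) (e 2) := by rw [← hK2]
  rw [a1, a2] at hk
  linear_combination -hk - K X Y (e 2) (e 3) * hs2
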